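/- If T : X ⇉ X* is a maximal monotone operator whose domain D(T) is bounded, then the convex hull of the range R(T) is dense in X* for the weak-* topology. -/

import Mathlib

open NormedSpace Classical

noncomputable section

/-- effective domain of an extended-real-valued function -/
def edom {E : Type*} (f : E → EReal) : Set E := {x | f x < ⊤}

/-- indicator function (0 on the set, +∞ off it) -/
def indic {E : Type*} (C : Set E) : E → EReal := fun x => if x ∈ C then 0 else ⊤

/-- convexity for EReal-valued functions -/
def ErConvex {E : Type*} [AddCommGroup E] [Module ℝ E] (f : E → EReal) : Prop :=
  ∀ x y : E, ∀ a b : ℝ, 0 ≤ a → 0 ≤ b → a + b = 1 →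
    f (a • x + b • y) ≤ (a : EReal) * f x + (b : EReal) * f y

/-- recession cone of a set -/
def recc {E : Type*} [AddCommGroup E] [Module ℝ E] (C : Set E) : Set E :=
  {u | ∀ z ∈ C, ∀ t : ℝ, 0 ≤ t → z + t • u ∈ C}

variable (X : Type*) [NormedAddCommGroup X] [NormedSpace ℝ X]

/-- Fenchel conjugate of f : X → EReal, defined on the dual -/
def conj1 (f : X → EReal) : StrongDual ℝ X → EReal :=
  fun p => ⨆ x : X, ((p x : EReal) - f x)

/-- Fenchel conjugate of h : X × X* → EReal, defined on X* × X** via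
⟨(x,x*),(y*,y**)⟩ = ⟨x,y*⟩ + ⟨y**,x*⟩ -/
def conj2 (h : X × StrongDual ℝ X → EReal) : StrongDual ℝ X × StrongDual ℝ (StrongDual ℝ X) → EReal :=
  fun p => ⨆ z : X × StrongDual ℝ X, (((p.1 z.1 + p.2 z.2 : ℝ) : EReal) - h z)

/-- The J operation: (Jh)(x,x*) = h*(x*, x), with X canonically embedded in X** -/
def Jop (h : X × StrongDual ℝ X → EReal) : X × StrongDual ℝ X → EReal :=
  fun z => conj2 X h (z.2, inclusionInDoubleDual ℝ X z.1)

/-- the duality product as an EReal-valued function on X × X* -/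
def pairE : X × StrongDual ℝ X → EReal := fun z => ((z.2 z.1 : ℝ) : EReal)

/-- weak-* closure of a subset of the dual -/
def wcl (S : Set (StrongDual ℝ X)) : Set (StrongDual ℝ X) :=
  StrongDual.toWeakDual ⁻¹' closure (StrongDual.toWeakDual '' S)

/-- monotone subset of X × X* -/
def MonotoneSet (T : Set (X × StrongDual ℝ X)) : Prop :=
  ∀ p ∈ T, ∀ q ∈ T, 0 ≤ (p.2 - q.2) (p.1 - q.1)

/-- maximal monotone subset of X × X* -/
def MaxMonotone (T : Set (X × StrongDual ℝ X)) : Prop :=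
  MonotoneSet X T ∧ ∀ S : Set (X × StrongDual ℝ X), MonotoneSet X S → T ⊆ S → S = T

/-- the Fitzpatrick family of a maximal monotone operator: closed convex functions
majorizing the duality product and coinciding with it on T -/
def FitzFamily (T : Set (X × StrongDual ℝ X)) : Set ((X × StrongDual ℝ X) → EReal) :=
  {h | ErConvex h ∧ LowerSemicontinuous h ∧ (∀ z, pairE X z ≤ h z) ∧
       ∀ z ∈ T, h z = pairE X z}

/-- lower semicontinuity with respect to the strong × weak-* topology on X × X* -/
def lscSW (h : X × StrongDual ℝ X → EReal) : Prop :=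
  LowerSemicontinuous (fun p : X × WeakDual ℝ X => h (p.1, StrongDual.toWeakDual.symm p.2))

end

section Aux

noncomputable def evalL (X : Type*) [NormedAddCommGroup X] [NormedSpace ℝ X] :
    X →ₗ[ℝ] (WeakDual ℝ X →ₗ[ℝ] ℝ) where
  toFun x :=
    { toFun := fun y => y x
      map_add' := fun _ _ => rfl
      map_smul' := fun _ _ => rfl }
  map_add' x₁ x₂ := LinearMap.ext fun y => map_add y x₁ x₂
  map_smul' c x := LinearMap.ext fun y => map_smul y c x

theorem weakdual_dual_eval {X : Type*} [NormedAddCommGroup X] [NormedSpace ℝ X]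
    (f : WeakDual ℝ X →L[ℝ] ℝ) : ∃ x : X, ∀ y : WeakDual ℝ X, f y = y x := by
  have hcont : ContinuousAt f (0 : WeakDual ℝ X) := f.continuous.continuousAt
  rw [ContinuousAt, map_zero] at hcont
  have hU : f ⁻¹' Metric.ball (0:ℝ) 1 ∈ nhds (0 : WeakDual ℝ X) :=
    hcont (Metric.ball_mem_nhds 0 one_pos)
  have hnhds : nhds (0 : WeakDual ℝ X) =
      Filter.comap (fun (y : WeakDual ℝ X) (x : X) => y x) (nhds (0 : X → ℝ)) :=
    nhds_induced _ _
  rw [hnhds, Filter.mem_comap] at hU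
  obtain ⟨S, hS, hSsub⟩ := hU
  rw [nhds_pi, Filter.mem_pi] at hS
  obtain ⟨I, hIfin, V, hV, hIV⟩ := hS
  have : Finite I := hIfin.to_subtype
  have hker : ⨅ i : I, LinearMap.ker (evalL X i.1) ≤
      LinearMap.ker (f : WeakDual ℝ X →ₗ[ℝ] ℝ) := by
    intro y hy
    simp only [Submodule.mem_iInf, LinearMap.mem_ker] at hy ⊢
    have key : ∀ t : ℝ, |f (t • y)| < 1 := by
      intro t
      have hmem : (fun x : X => (t • y) x) ∈ S := by
        apply hIV
        intro x hx
        have hy0 : y x = 0 := hy ⟨x, hx⟩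
        show (t • y) x ∈ V x
        have h0 : (t • y) x = 0 := by
          show t • (y x) = 0
          rw [hy0, smul_zero]
        rw [h0]
        exact mem_of_mem_nhds (hV x)
      have := hSsub hmem
      rw [Set.mem_preimage, Metric.mem_ball, Real.dist_eq, sub_zero] at this
      exact this
    by_contra hne
    have h2 := key (2 / f y)
    rw [map_smul, smul_eq_mul, div_mul_cancel₀ _ (show (f y : ℝ) ≠ 0 from hne)] at h2
    norm_num at h2
  have hspan := mem_span_of_iInf_ker_le_ker hker
  have hle : Submodule.span ℝ (Set.range fun i : I => evalL X i.1) ≤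
      LinearMap.range (evalL X) := by
    rw [Submodule.span_le]
    rintro _ ⟨i, rfl⟩
    exact ⟨i.1, rfl⟩
  obtain ⟨x, hx⟩ := hle hspan
  exact ⟨x, fun y => (LinearMap.congr_fun hx y).symm⟩

end Aux

theorem statement13 (X : Type*) [NormedAddCommGroup X] [NormedSpace ℝ X] [CompleteSpace X]
    (T : Set (X × StrongDual ℝ X)) (hT : MaxMonotone X T)
    (hbdd : Bornology.IsBounded (Prod.fst '' T)) :
    wcl X (convexHull ℝ (Prod.snd '' T)) = Set.univ := by
  by_contra hne
  obtain ⟨xs, hxs⟩ : ∃ xs : StrongDual ℝ X, xs ∉ wcl X (convexHull ℝ (Prod.snd '' T)) := by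
    by_contra h
    push_neg at h
    exact hne (Set.eq_univ_of_forall h)
  -- T is nonempty
  obtain ⟨z, zs, hzT⟩ : ∃ z zs, (z, zs) ∈ T := by
    by_contra h
    push_neg at h
    have hTe : T = ∅ := by
      ext p
      simp only [Set.mem_empty_iff_false, iff_false]
      exact fun hp => h p.1 p.2 (by simpa using hp)
    have hmono : MonotoneSet X {((0:X), (0 : StrongDual ℝ X))} := by
      rintro p hp q hq
      simp only [Set.mem_singleton_iff] at hp hq
      subst hp; subst hq; simp
    have := hT.2 _ hmono (by rw [hTe]; exact Set.empty_subset _)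
    rw [hTe] at this
    exact absurd this (by simp [Set.eq_empty_iff_forall_notMem])
  -- separation
  have hconv : Convex ℝ (closure (StrongDual.toWeakDual ''
      (convexHull ℝ (Prod.snd '' T)))) :=
    ((convex_convexHull ℝ _).linear_image
      (StrongDual.toWeakDual : StrongDual ℝ X ≃ₗ[ℝ] WeakDual ℝ X).toLinearMap).closure
  have hxs' : StrongDual.toWeakDual xs ∉ closure (StrongDual.toWeakDual ''
      (convexHull ℝ (Prod.snd '' T))) := hxs
  have hLC : LocallyConvexSpace ℝ (WeakDual ℝ X) := WeakBilin.locallyConvexSpace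
  obtain ⟨f, u, hfu, hux⟩ :=
    geometric_hahn_banach_closed_point hconv isClosed_closure hxs'
  obtain ⟨x, hx⟩ := weakdual_dual_eval f
  rw [hx] at hux
  have hux' : u < xs x := hux
  have hsep : ∀ p ∈ T, (p.2 : StrongDual ℝ X) x < u := by
    intro p hp
    have hmem : StrongDual.toWeakDual p.2 ∈ closure (StrongDual.toWeakDual ''
        (convexHull ℝ (Prod.snd '' T))) :=
      subset_closure ⟨p.2, subset_convexHull ℝ _ ⟨p, hp, rfl⟩, rfl⟩
    have := hfu _ hmem
    rw [hx] at this
    exact this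
  -- bound on the domain
  rw [isBounded_iff_forall_norm_le] at hbdd
  obtain ⟨M, hM⟩ := hbdd
  have hMz : ‖z‖ ≤ M := hM z ⟨(z, zs), hzT, rfl⟩
  set ε : ℝ := xs x - u with hε_def
  have hε : 0 < ε := by simp only [hε_def]; linarith
  set C : ℝ := ‖xs - zs‖ * (M + ‖z‖) with hC_def
  have hC : 0 ≤ C :=
    mul_nonneg (norm_nonneg _) (by linarith [norm_nonneg z])
  set t : ℝ := C / ε with ht_def
  have ht : 0 ≤ t := div_nonneg hC hε.le
  set u0 : X := z + t • x with hu0_def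
  -- core monotonicity estimate
  have hcore : ∀ p ∈ T, 0 ≤ (xs - p.2) (u0 - p.1) := by
    rintro ⟨y, ys⟩ hy
    have hyM : ‖y‖ ≤ M := hM y ⟨(y, ys), hy, rfl⟩
    have hrewr : u0 - y = (z - y) + t • x := by
      rw [hu0_def]; abel
    have hexp : (xs - ys) (u0 - y) = (xs - ys) (z - y) + t * ((xs - ys) x) := by
      rw [hrewr, map_add, map_smul, smul_eq_mul]
    have h1 : -(‖xs - zs‖ * ‖z - y‖) ≤ (xs - zs) (z - y) := by
      have hop := (xs - zs).le_opNorm (z - y)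
      rw [Real.norm_eq_abs] at hop
      exact neg_le_of_abs_le hop
    have h2 : 0 ≤ (zs - ys) (z - y) := hT.1 (z, zs) hzT (y, ys) hy
    have h3 : (xs - ys) (z - y) = (xs - zs) (z - y) + (zs - ys) (z - y) := by
      simp only [ContinuousLinearMap.sub_apply]
      ring
    have h4 : ‖z - y‖ ≤ M + ‖z‖ := by
      have := norm_sub_le z y
      linarith
    have h5 : ‖xs - zs‖ * ‖z - y‖ ≤ C := by
      rw [hC_def]
      exact mul_le_mul_of_nonneg_left h4 (norm_nonneg _)
    have h6 : ε ≤ (xs - ys) x := by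
      have := hsep (y, ys) hy
      simp only [ContinuousLinearMap.sub_apply]
      simp only [hε_def]
      linarith
    have h7 : t * ε ≤ t * ((xs - ys) x) := mul_le_mul_of_nonneg_left h6 ht
    have h8 : t * ε = C := by
      rw [ht_def, div_mul_cancel₀ _ hε.ne']
    show 0 ≤ (xs - ys) (u0 - y)
    rw [hexp]
    linarith
  -- extend T
  have hSmono : MonotoneSet X (insert (u0, xs) T) := by
    rintro p hp q hq
    rcases Set.mem_insert_iff.mp hp with hp | hp <;>
      rcases Set.mem_insert_iff.mp hq with hq | hq
    · subst hp; subst hq; simp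
    · subst hp
      exact hcore q hq
    · subst hq
      have h := hcore p hp
      have : (p.2 - xs) (p.1 - u0) = (xs - p.2) (u0 - p.1) := by
        simp only [ContinuousLinearMap.sub_apply, map_sub]
        ring
      rw [this]
      exact h
    · exact hT.1 p hp q hq
  have heq := hT.2 _ hSmono (Set.subset_insert _ _)
  have hmem : (u0, xs) ∈ T := heq ▸ Set.mem_insert _ _
  exact hxs' (subset_closure
    ⟨xs, subset_convexHull ℝ _ ⟨(u0, xs), hmem, rfl⟩, rfl⟩)
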